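/- For every ε with 0 < ε ≤ 1/(2√2), the operator M₁ = ε (|00⟩ + |11⟩)(⟨00| + ⟨11|) on ℂ² ⊗ ℂ² is an effect that is not separable positive (hence entangled), and yet with M = 2M₁ − 𝟙 the dual Bell–CHSH inequality −2 ≤ D ≤ 2 holds for all qubit states ρ₀^A, ρ₁^A, ρ₀^B, ρ₁^B, where D = E(ρ₀^A, ρ₀^B, M) + E(ρ₀^A, ρ₁^B, M) + E(ρ₁^A, ρ₀^B, M) − E(ρ₁^A, ρ₁^B, M). -/

import Mathlib

open Matrix Kronecker ComplexOrder

/-- A quantum state: positive semidefinite matrix of trace one. -/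
def IsState {d : ℕ} (ρ : Matrix (Fin d) (Fin d) ℂ) : Prop :=
  ρ.PosSemidef ∧ ρ.trace = 1

/-- Separable positivity: a finite sum of Kronecker products of
positive semidefinite matrices. -/
def SepPos {dA dB : ℕ} (S : Matrix (Fin dA × Fin dB) (Fin dA × Fin dB) ℂ) : Prop :=
  ∃ (n : ℕ) (A : Fin n → Matrix (Fin dA) (Fin dA) ℂ)
    (B : Fin n → Matrix (Fin dB) (Fin dB) ℂ),
    (∀ i, (A i).PosSemidef) ∧ (∀ i, (B i).PosSemidef) ∧ S = ∑ i, (A i) ⊗ₖ (B i)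

/-- The difference from ignorance for a two-qubit system (`α₂ α₂ / 2 = 2`). -/
noncomputable def Ediff2
    (ρA ρB : Matrix (Fin 2) (Fin 2) ℂ)
    (M : Matrix (Fin 2 × Fin 2) (Fin 2 × Fin 2) ℂ) : ℝ :=
  2 * ((((ρA - (2 : ℂ)⁻¹ • 1) ⊗ₖ (ρB - (2 : ℂ)⁻¹ • 1)) * M).trace).re

/-- The unnormalized vector `|00⟩ + |11⟩`. -/
def unnormBell : Fin 2 × Fin 2 → ℂ :=
  fun p => if p = (0, 0) then 1 else if p = (1, 1) then 1 else 0

/-! ### Auxiliary lemmas -/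

lemma aux_psd_diag_nonneg {n : Type*} [Fintype n] [DecidableEq n] {M : Matrix n n ℂ}
    (hM : M.PosSemidef) (i : n) : 0 ≤ M i i := by
  have := hM.dotProduct_mulVec_nonneg (Pi.single i 1)
  simpa [dotProduct, mulVec, Pi.single_apply, Finset.sum_ite_eq, Finset.sum_ite_eq'] using this

lemma aux_trace_mul_psd_nonneg {n : Type*} [Fintype n] [DecidableEq n] {A B : Matrix n n ℂ}
    (hA : A.PosSemidef) (hB : B.PosSemidef) : 0 ≤ (A * B).trace := by
  obtain ⟨X, rfl⟩ : ∃ X : Matrix n n ℂ, B = star X * X := by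
    open scoped MatrixOrder in exact CStarAlgebra.nonneg_iff_eq_star_mul_self.mp hB.nonneg
  have e : (A * (star X * X)).trace = (X * A * Xᴴ).trace := by
    rw [star_eq_conjTranspose, ← Matrix.mul_assoc, Matrix.trace_mul_comm, ← Matrix.mul_assoc]
  rw [e]
  have hP : (X * A * Xᴴ).PosSemidef := hA.mul_mul_conjTranspose_same _
  exact Finset.sum_nonneg fun i _ => aux_psd_diag_nonneg hP i

lemma aux_psd_det_nonneg {n : Type*} [Fintype n] [DecidableEq n] {M : Matrix n n ℂ}
    (hM : M.PosSemidef) : 0 ≤ M.det := by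
  rw [hM.1.det_eq_prod_eigenvalues]
  exact Finset.prod_nonneg fun i _ => Complex.zero_le_real.2 (hM.eigenvalues_nonneg i)

noncomputable def auxPhi : Matrix (Fin 2) (Fin 2) ℂ := !![0, 1; -1, 0]

noncomputable def auxF (S : Matrix (Fin 2 × Fin 2) (Fin 2 × Fin 2) ℂ) : ℂ :=
  ∑ p : (Fin 2 × Fin 2) × (Fin 2 × Fin 2),
    star (auxPhi p.1.1 p.2.2) * S p.1 p.2 * auxPhi p.2.1 p.1.2

lemma auxF_sum {n : ℕ} (X : Fin n → Matrix (Fin 2 × Fin 2) (Fin 2 × Fin 2) ℂ) :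
    auxF (∑ i, X i) = ∑ i, auxF (X i) := by
  simp only [auxF, Matrix.sum_apply, Finset.mul_sum, Finset.sum_mul]
  rw [Finset.sum_comm]

lemma auxF_kron (A B : Matrix (Fin 2) (Fin 2) ℂ) :
    auxF (A ⊗ₖ B) = ((auxPhiᴴ * A * auxPhi) * B).trace := by
  simp [auxF, auxPhi, Fintype.sum_prod_type, Fin.sum_univ_two, Matrix.trace_fin_two,
    Matrix.mul_apply, Matrix.conjTranspose_apply, Matrix.kroneckerMap_apply]
  ring

lemma auxF_bell (ε : ℝ) :
    auxF ((ε : ℂ) • vecMulVec unnormBell (star unnormBell)) = -2 * ε := by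
  simp [auxF, auxPhi, Fintype.sum_prod_type, Fin.sum_univ_two, vecMulVec_apply,
    unnormBell, Prod.ext_iff]
  ring

lemma aux_state_param {ρ : Matrix (Fin 2) (Fin 2) ℂ} (h : IsState ρ) :
    ∃ z x y : ℝ, z^2 + (2*x)^2 + (2*y)^2 ≤ 1 ∧
      ρ 0 0 = (((1+z)/2 : ℝ) : ℂ) ∧ ρ 1 1 = (((1-z)/2 : ℝ) : ℂ) ∧
      ρ 0 1 = (x : ℂ) + (y : ℂ) * Complex.I ∧ ρ 1 0 = (x : ℂ) - (y : ℂ) * Complex.I := by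
  obtain ⟨hpsd, htr⟩ := h
  have h00 : star (ρ 0 0) = ρ 0 0 := hpsd.1.apply 0 0
  have h11 : star (ρ 1 1) = ρ 1 1 := hpsd.1.apply 1 1
  have h10 : star (ρ 0 1) = ρ 1 0 := hpsd.1.apply 1 0
  have him00 : (ρ 0 0).im = 0 := by
    have := congrArg Complex.im h00
    simp [Complex.star_def] at this; linarith
  have him11 : (ρ 1 1).im = 0 := by
    have := congrArg Complex.im h11
    simp [Complex.star_def] at this; linarith
  rw [Matrix.trace_fin_two] at htr
  have htr_re : (ρ 0 0).re + (ρ 1 1).re = 1 := by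
    have := congrArg Complex.re htr; simpa using this
  refine ⟨(ρ 0 0).re - (ρ 1 1).re, (ρ 0 1).re, (ρ 0 1).im, ?_, ?_, ?_, ?_, ?_⟩
  · have hdet := aux_psd_det_nonneg hpsd
    rw [Matrix.det_fin_two] at hdet
    rw [Complex.le_def] at hdet
    have hre := hdet.1
    rw [← h10] at hre
    simp [Complex.mul_re, Complex.star_def, him00, him11] at hre
    nlinarith [hre, htr_re]
  · apply Complex.ext <;> simp [him00] <;> linarith
  · apply Complex.ext <;> simp [him11] <;> linarith
  · apply Complex.ext <;> simp
  · rw [← h10]; apply Complex.ext <;> simp [Complex.star_def]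

lemma aux_Ediff2_formula (ε : ℝ) (ρA ρB : Matrix (Fin 2) (Fin 2) ℂ)
    (zA xA yA zB xB yB : ℝ)
    (hA00 : ρA 0 0 = (((1+zA)/2 : ℝ) : ℂ)) (hA11 : ρA 1 1 = (((1-zA)/2 : ℝ) : ℂ))
    (hA01 : ρA 0 1 = (xA : ℂ) + (yA : ℂ) * Complex.I)
    (hA10 : ρA 1 0 = (xA : ℂ) - (yA : ℂ) * Complex.I)
    (hB00 : ρB 0 0 = (((1+zB)/2 : ℝ) : ℂ)) (hB11 : ρB 1 1 = (((1-zB)/2 : ℝ) : ℂ))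
    (hB01 : ρB 0 1 = (xB : ℂ) + (yB : ℂ) * Complex.I)
    (hB10 : ρB 1 0 = (xB : ℂ) - (yB : ℂ) * Complex.I) :
    Ediff2 ρA ρB ((2 : ℂ) • ((ε : ℂ) • vecMulVec unnormBell (star unnormBell)) - 1)
      = 2*ε*(zA*zB + 4*(xA*xB) - 4*(yA*yB)) := by
  unfold Ediff2
  have key : ((((ρA - (2 : ℂ)⁻¹ • 1) ⊗ₖ (ρB - (2 : ℂ)⁻¹ • 1))
      * ((2 : ℂ) • ((ε : ℂ) • vecMulVec unnormBell (star unnormBell)) - 1)).trace)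
      = ((ε*(zA*zB) + 4*ε*(xA*xB) - 4*ε*(yA*yB) : ℝ) : ℂ) := by
    simp only [Matrix.trace, Matrix.diag, Matrix.mul_apply, Fintype.sum_prod_type,
      Fin.sum_univ_two, Matrix.sub_apply, Matrix.smul_apply, Matrix.one_apply,
      Matrix.kroneckerMap_apply, vecMulVec_apply, Pi.star_apply, unnormBell]
    simp only [Prod.mk.injEq, Prod.ext_iff]
    norm_num
    rw [hA00, hA11, hA01, hA10, hB00, hB11, hB01, hB10]
    rw [Complex.ext_iff]
    constructor <;> simp <;> ring
  rw [key, Complex.ofReal_re]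
  ring

lemma aux_chsh_abstract {E : Type*} [NormedAddCommGroup E] [InnerProductSpace ℝ E]
    (r₀ r₁ s₀ s₁ : E) (h0 : ‖r₀‖ ≤ 1) (h1 : ‖r₁‖ ≤ 1) (k0 : ‖s₀‖ ≤ 1) (k1 : ‖s₁‖ ≤ 1) :
    |(inner ℝ r₀ s₀ : ℝ) + inner ℝ r₀ s₁ + inner ℝ r₁ s₀ - inner ℝ r₁ s₁| ≤ 2 * Real.sqrt 2 := by
  have e : (inner ℝ r₀ s₀ : ℝ) + inner ℝ r₀ s₁ + inner ℝ r₁ s₀ - inner ℝ r₁ s₁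
      = inner ℝ r₀ (s₀ + s₁) + inner ℝ r₁ (s₀ - s₁) := by
    rw [inner_add_right, inner_sub_right]; ring
  rw [e]
  have b0 : |(inner ℝ r₀ (s₀ + s₁) : ℝ)| ≤ ‖s₀ + s₁‖ := by
    calc |(inner ℝ r₀ (s₀ + s₁) : ℝ)| ≤ ‖r₀‖ * ‖s₀ + s₁‖ := abs_real_inner_le_norm _ _
    _ ≤ 1 * ‖s₀ + s₁‖ := by gcongr
    _ = ‖s₀ + s₁‖ := one_mul _
  have b1 : |(inner ℝ r₁ (s₀ - s₁) : ℝ)| ≤ ‖s₀ - s₁‖ := by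
    calc |(inner ℝ r₁ (s₀ - s₁) : ℝ)| ≤ ‖r₁‖ * ‖s₀ - s₁‖ := abs_real_inner_le_norm _ _
    _ ≤ 1 * ‖s₀ - s₁‖ := by gcongr
    _ = ‖s₀ - s₁‖ := one_mul _
  have par : ‖s₀ + s₁‖^2 + ‖s₀ - s₁‖^2 = 2*‖s₀‖^2 + 2*‖s₁‖^2 := by
    have := parallelogram_law_with_norm ℝ s₀ s₁
    nlinarith [this]
  have hsum : ‖s₀ + s₁‖ + ‖s₀ - s₁‖ ≤ 2 * Real.sqrt 2 := by
    set u := ‖s₀ + s₁‖; set v := ‖s₀ - s₁‖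
    have hu : 0 ≤ u := norm_nonneg _
    have hv : 0 ≤ v := norm_nonneg _
    have huv : u^2 + v^2 ≤ 4 := by nlinarith [norm_nonneg s₀, norm_nonneg s₁]
    have h8 : (2*Real.sqrt 2)^2 = 8 := by
      rw [mul_pow, Real.sq_sqrt (by norm_num : (2:ℝ) ≥ 0)]; norm_num
    nlinarith [sq_nonneg (u - v), sq_nonneg (u + v - 2*Real.sqrt 2), Real.sqrt_nonneg 2]
  calc |(inner ℝ r₀ (s₀ + s₁) : ℝ) + inner ℝ r₁ (s₀ - s₁)|
      ≤ |(inner ℝ r₀ (s₀ + s₁) : ℝ)| + |(inner ℝ r₁ (s₀ - s₁) : ℝ)| := abs_add_le _ _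
    _ ≤ ‖s₀ + s₁‖ + ‖s₀ - s₁‖ := add_le_add b0 b1
    _ ≤ 2 * Real.sqrt 2 := hsum

noncomputable def auxVec (a b c : ℝ) : EuclideanSpace ℝ (Fin 3) :=
  (WithLp.equiv 2 (Fin 3 → ℝ)).symm ![a, b, c]

lemma auxVec_norm_le (a b c : ℝ) (h : a^2 + b^2 + c^2 ≤ 1) : ‖auxVec a b c‖ ≤ 1 := by
  rw [EuclideanSpace.norm_eq]
  refine Real.sqrt_le_one.mpr ?_
  simp [auxVec, Fin.sum_univ_three, Real.norm_eq_abs, sq_abs, WithLp.equiv_symm_apply, PiLp.toLp_apply]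
  nlinarith [h]

lemma auxVec_inner (a b c d e f : ℝ) :
    (inner ℝ (auxVec a b c) (auxVec d e f) : ℝ) = a*d + b*e + c*f := by
  simp [auxVec, PiLp.inner_apply, Fin.sum_univ_three, WithLp.equiv_symm_apply, PiLp.toLp_apply]
  ring

lemma aux_bell_herm : (vecMulVec unnormBell (star unnormBell)).IsHermitian := by
  ext i j
  simp [conjTranspose_apply, vecMulVec_apply, mul_comm]

lemma aux_bell_mulVec (x : Fin 2 × Fin 2 → ℂ) :
    (vecMulVec unnormBell (star unnormBell)) *ᵥ x = (star unnormBell ⬝ᵥ x) • unnormBell := by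
  funext i; simp [mulVec, vecMulVec_apply, dotProduct, Finset.mul_sum, mul_comm, mul_left_comm]

set_option maxHeartbeats 1000000 in
/-- for `0 < ε ≤ 1/(2√2)`, the operator
`M₁ = ε (|00⟩ + |11⟩)(⟨00| + ⟨11|)` is an effect, is not separable positive
(hence entangled), yet with `M = 2M₁ - 𝟙` the dual Bell–CHSH inequality
`-2 ≤ D ≤ 2` holds for all qubit states. -/
theorem small_entangled_effect_satisfies_dual_bell
    (ε : ℝ) (hε : 0 < ε) (hε' : ε ≤ 1 / (2 * Real.sqrt 2)) :
    ((ε : ℂ) • vecMulVec unnormBell (star unnormBell)).PosSemidef ∧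
    ((1 : Matrix (Fin 2 × Fin 2) (Fin 2 × Fin 2) ℂ)
        - (ε : ℂ) • vecMulVec unnormBell (star unnormBell)).PosSemidef ∧
    ¬ SepPos ((ε : ℂ) • vecMulVec unnormBell (star unnormBell)) ∧
    (∀ ρA₀ ρA₁ ρB₀ ρB₁ : Matrix (Fin 2) (Fin 2) ℂ,
      IsState ρA₀ → IsState ρA₁ → IsState ρB₀ → IsState ρB₁ →
      -2 ≤ Ediff2 ρA₀ ρB₀ ((2 : ℂ) • ((ε : ℂ) • vecMulVec unnormBell (star unnormBell)) - 1)
          + Ediff2 ρA₀ ρB₁ ((2 : ℂ) • ((ε : ℂ) • vecMulVec unnormBell (star unnormBell)) - 1)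
          + Ediff2 ρA₁ ρB₀ ((2 : ℂ) • ((ε : ℂ) • vecMulVec unnormBell (star unnormBell)) - 1)
          - Ediff2 ρA₁ ρB₁ ((2 : ℂ) • ((ε : ℂ) • vecMulVec unnormBell (star unnormBell)) - 1) ∧
        Ediff2 ρA₀ ρB₀ ((2 : ℂ) • ((ε : ℂ) • vecMulVec unnormBell (star unnormBell)) - 1)
          + Ediff2 ρA₀ ρB₁ ((2 : ℂ) • ((ε : ℂ) • vecMulVec unnormBell (star unnormBell)) - 1)
          + Ediff2 ρA₁ ρB₀ ((2 : ℂ) • ((ε : ℂ) • vecMulVec unnormBell (star unnormBell)) - 1)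
          - Ediff2 ρA₁ ρB₁ ((2 : ℂ) • ((ε : ℂ) • vecMulVec unnormBell (star unnormBell)) - 1) ≤ 2) := by
  have hs2 : (1:ℝ) ≤ Real.sqrt 2 := by
    rw [show (1:ℝ) = Real.sqrt 1 from (Real.sqrt_one).symm]
    exact Real.sqrt_le_sqrt (by norm_num)
  have hεhalf : ε ≤ 1/2 := by
    refine le_trans hε' ?_
    have : (1:ℝ)/(2 * Real.sqrt 2) ≤ 1/2 :=
      one_div_le_one_div_of_le (by norm_num) (by linarith)
    exact this
  refine ⟨?_, ?_, ?_, ?_⟩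
  · -- M₁ is PSD
    refine PosSemidef.of_dotProduct_mulVec_nonneg ?_ ?_
    · have h := aux_bell_herm
      unfold Matrix.IsHermitian at h ⊢
      rw [conjTranspose_smul, h]
      congr 1
      simp [Complex.star_def, Complex.conj_ofReal]
    · intro x
      rw [smul_mulVec, dotProduct_smul, aux_bell_mulVec, dotProduct_smul]
      have h2 : star x ⬝ᵥ unnormBell = star (star unnormBell ⬝ᵥ x) := by
        simp [dotProduct, star_sum, mul_comm]
      rw [h2, smul_eq_mul, smul_eq_mul]
      exact mul_nonneg (Complex.zero_le_real.2 hε.le) (mul_star_self_nonneg _)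
  · -- 1 - M₁ is PSD
    refine PosSemidef.of_dotProduct_mulVec_nonneg ?_ ?_
    · have h := aux_bell_herm
      unfold Matrix.IsHermitian at h ⊢
      rw [conjTranspose_sub, conjTranspose_one, conjTranspose_smul, h]
      congr 2
      simp [Complex.star_def, Complex.conj_ofReal]
    · intro x
      rw [sub_mulVec, dotProduct_sub, one_mulVec]
      rw [smul_mulVec, aux_bell_mulVec, dotProduct_smul, dotProduct_smul]
      have h2 : star x ⬝ᵥ unnormBell = star (star unnormBell ⬝ᵥ x) := by
        simp [dotProduct, star_sum, mul_comm]
      rw [h2]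
      have hb : star unnormBell ⬝ᵥ x = x (0,0) + x (1,1) := by
        simp [dotProduct, Fintype.sum_prod_type, Fin.sum_univ_two, unnormBell, Prod.ext_iff]
      have hx : star x ⬝ᵥ x = ∑ p, (Complex.normSq (x p) : ℂ) := by
        simp [dotProduct, Complex.star_def, Complex.normSq_eq_conj_mul_self]
      rw [hb, hx, smul_eq_mul, smul_eq_mul]
      have key : (ε:ℂ) * ((x (0,0) + x (1,1)) * star (x (0,0) + x (1,1)))
          = ((ε * Complex.normSq (x (0,0) + x (1,1)) : ℝ) : ℂ) := by
        rw [Complex.star_def, Complex.mul_conj]; push_cast; ring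
      rw [key]
      have hsum : (∑ p, (Complex.normSq (x p) : ℂ))
          = (((∑ p, Complex.normSq (x p)) : ℝ) : ℂ) := by push_cast; ring
      rw [hsum, ← Complex.ofReal_sub, Complex.zero_le_real, Fintype.sum_prod_type]
      simp only [Fin.sum_univ_two]
      have e1 := Complex.normSq_nonneg (x (0,1))
      have e2 := Complex.normSq_nonneg (x (1,0))
      simp only [Complex.normSq_apply, Complex.add_re, Complex.add_im] at *
      nlinarith [sq_nonneg ((x (0,0)).re - (x (1,1)).re), sq_nonneg ((x (0,0)).im - (x (1,1)).im)]
  · -- not separable positive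
    rintro ⟨n, A, B, hA, hB, hS⟩
    have h2 : 0 ≤ auxF ((ε : ℂ) • vecMulVec unnormBell (star unnormBell)) := by
      rw [hS, auxF_sum]
      refine Finset.sum_nonneg fun i _ => ?_
      rw [auxF_kron]
      exact aux_trace_mul_psd_nonneg ((hA i).conjTranspose_mul_mul_same auxPhi) (hB i)
    rw [auxF_bell] at h2
    have h3 : (0:ℂ) ≤ ((-2*ε : ℝ) : ℂ) := by convert h2 using 1; push_cast; ring
    have h4 : (0:ℝ) ≤ -2*ε := Complex.zero_le_real.1 h3
    linarith
  · -- dual Bell-CHSH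
    intro ρA₀ ρA₁ ρB₀ ρB₁ hA0 hA1 hB0 hB1
    obtain ⟨za0, xa0, ya0, na0, ea0, fa0, ga0, ha0⟩ := aux_state_param hA0
    obtain ⟨za1, xa1, ya1, na1, ea1, fa1, ga1, ha1⟩ := aux_state_param hA1
    obtain ⟨zb0, xb0, yb0, nb0, eb0, fb0, gb0, hb0⟩ := aux_state_param hB0
    obtain ⟨zb1, xb1, yb1, nb1, eb1, fb1, gb1, hb1⟩ := aux_state_param hB1
    rw [aux_Ediff2_formula ε ρA₀ ρB₀ za0 xa0 ya0 zb0 xb0 yb0 ea0 fa0 ga0 ha0 eb0 fb0 gb0 hb0,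
      aux_Ediff2_formula ε ρA₀ ρB₁ za0 xa0 ya0 zb1 xb1 yb1 ea0 fa0 ga0 ha0 eb1 fb1 gb1 hb1,
      aux_Ediff2_formula ε ρA₁ ρB₀ za1 xa1 ya1 zb0 xb0 yb0 ea1 fa1 ga1 ha1 eb0 fb0 gb0 hb0,
      aux_Ediff2_formula ε ρA₁ ρB₁ za1 xa1 ya1 zb1 xb1 yb1 ea1 fa1 ga1 ha1 eb1 fb1 gb1 hb1]
    set r0 : EuclideanSpace ℝ (Fin 3) := auxVec za0 (2*xa0) (2*ya0) with hr0
    set r1 : EuclideanSpace ℝ (Fin 3) := auxVec za1 (2*xa1) (2*ya1) with hr1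
    set s0 : EuclideanSpace ℝ (Fin 3) := auxVec zb0 (2*xb0) (-(2*yb0)) with hs0
    set s1 : EuclideanSpace ℝ (Fin 3) := auxVec zb1 (2*xb1) (-(2*yb1)) with hs1
    have hT := aux_chsh_abstract r0 r1 s0 s1
      (auxVec_norm_le _ _ _ (by nlinarith [na0]))
      (auxVec_norm_le _ _ _ (by nlinarith [na1]))
      (auxVec_norm_le _ _ _ (by nlinarith [nb0]))
      (auxVec_norm_le _ _ _ (by nlinarith [nb1]))
    rw [hr0, hr1, hs0, hs1] at hT
    rw [auxVec_inner, auxVec_inner, auxVec_inner, auxVec_inner] at hT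
    obtain ⟨hlo, hhi⟩ := abs_le.mp hT
    have hmul : ε * (2 * Real.sqrt 2) ≤ 1 := by
      have hpos : (0:ℝ) < 2 * Real.sqrt 2 := by linarith
      exact (le_div_iff₀ hpos).mp hε'
    have hS_hi := mul_le_mul_of_nonneg_left hhi hε.le
    have hS_lo := mul_le_mul_of_nonneg_left hlo hε.le
    constructor
    · linarith [hS_lo, hmul]
    · linarith [hS_hi, hmul]
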